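/- There exists a universal constant $C > 0$ with the following property. Let $M = N$ be a positive integer (quadratic DFT case, $D = N$), let $L, K, K_\theta, K_\tau$ be positive integers, let $(\tau_p, \theta_p)_{p=0}^{L-1}$ be delay/angle pairs in $[0,1)^2$ satisfying the angular separation condition (any two distinct angles among $\theta_0,\dots,\theta_{L-1}$ differ by at least $2K_\theta/M$ in wrap-around distance) and the limited delays-per-angle condition (each distinct angle occurs in at most $K$ of the pairs), and let $\rho_0,\dots,\rho_{L-1} \in \mathbb{C}$. Set $W = \sum_{p=0}^{L-1} \rho_p \, u_{\tau_p} u_{\theta_p}^H \in \mathbb{C}^{N \times M}$. Then there exists a matrix $W_\Omega \in \mathbb{C}^{N \times M}$ having at most $L(2K_\theta+1)$ nonzero columns, each nonzero column having at most $K(2K_\tau+1)$ nonzero entries, such that $\|W - W_\Omega\|_F \le C\,(K_\theta^{-1/2} + K_\tau^{-1/2}) \sum_{p=0}^{L-1} |\rho_p|$, where $\|\cdot\|_F$ is the Frobenius norm. -/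

import Mathlib

open scoped BigOperators Matrix

noncomputable section

/-- Array manifold vector `a(θ) ∈ ℂ^M`, `a(θ)_m = e^{-j 2π m θ}` (the delay manifold
`b(τ)` has the identical form). -/
def aVec (M : ℕ) (θ : ℝ) : Fin M → ℂ :=
  fun m => Complex.exp (-(((2 * Real.pi * (m : ℕ) * θ) : ℝ) : ℂ) * Complex.I)

/-- The `M × M` DFT matrix, `(F_M)_{m,n} = e^{-j 2π m n / M}`. -/
def dftMat (M : ℕ) : Matrix (Fin M) (Fin M) ℂ :=
  Matrix.of fun m n => Complex.exp (-(((2 * Real.pi * (m : ℕ) * (n : ℕ) / M) : ℝ) : ℂ) * Complex.I)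

/-- Discretized representation `u_θ = (1/M) F_M^H a(θ)` (same formula for `u_τ`). -/
def uVec (M : ℕ) (θ : ℝ) : Fin M → ℂ :=
  (1 / (M : ℂ)) • (dftMat M)ᴴ.mulVec (aVec M θ)

/-- Wrap-around distance between two points of `[0,1)`. -/
def wrapDist (x y : ℝ) : ℝ := min |x - y| (1 - |x - y|)

namespace OffgridAux

lemma uVec_apply (N : ℕ) (θ : ℝ) (n : Fin N) :
    uVec N θ n = (1 / (N : ℂ)) *
      ∑ m : Fin N, Complex.exp (((2 * Real.pi * (m : ℕ) * ((n : ℕ) / N - θ) : ℝ) : ℂ) * Complex.I) := by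
  unfold uVec
  simp only [Pi.smul_apply, smul_eq_mul]
  congr 1
  rw [Matrix.mulVec, dotProduct]
  apply Finset.sum_congr rfl
  intro m _
  rw [Matrix.conjTranspose_apply, dftMat, aVec, Matrix.of_apply]
  rw [Complex.star_def, ← Complex.exp_conj, ← Complex.exp_add]
  congr 1
  have : (starRingEnd ℂ) (-(((2 * Real.pi * (m : ℕ) * (n : ℕ) / N : ℝ)) : ℂ) * Complex.I)
      = (((2 * Real.pi * (m : ℕ) * (n : ℕ) / N : ℝ)) : ℂ) * Complex.I := by
    simp [map_mul, map_div₀, Complex.conj_I, Complex.conj_ofReal, map_ofNat]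
  rw [this]
  push_cast
  ring

lemma norm_uVec_le_one {N : ℕ} (hN : 0 < N) (θ : ℝ) (n : Fin N) : ‖uVec N θ n‖ ≤ 1 := by
  rw [uVec_apply]
  rw [norm_mul]
  have h1 : ‖∑ m : Fin N, Complex.exp (((2 * Real.pi * (m : ℕ) * ((n : ℕ) / N - θ) : ℝ) : ℂ) * Complex.I)‖ ≤ N := by
    calc ‖∑ m : Fin N, Complex.exp (((2 * Real.pi * (m : ℕ) * ((n : ℕ) / N - θ) : ℝ) : ℂ) * Complex.I)‖
        ≤ ∑ m : Fin N, ‖Complex.exp (((2 * Real.pi * (m : ℕ) * ((n : ℕ) / N - θ) : ℝ) : ℂ) * Complex.I)‖ :=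
          norm_sum_le _ _
      _ = ∑ m : Fin N, 1 := by
          apply Finset.sum_congr rfl; intro m _; exact Complex.norm_exp_ofReal_mul_I _
      _ = N := by simp
  have h2 : ‖(1 / (N : ℂ))‖ = 1 / N := by
    simp [norm_div]
  rw [h2]
  rw [div_mul_eq_mul_div, one_mul]
  rw [div_le_one (by exact_mod_cast hN)]
  exact h1

lemma norm_exp_mul_I_sub_one (φ : ℝ) :
    ‖Complex.exp ((φ:ℂ) * Complex.I) - 1‖ = 2 * |Real.sin (φ/2)| := by
  set a := Complex.exp (((φ/2 : ℝ):ℂ) * Complex.I) with ha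
  set b := Complex.exp (-(((φ/2 : ℝ):ℂ) * Complex.I)) with hb
  have e1 : a * b = 1 := by rw [ha, hb, ← Complex.exp_add]; simp
  have e2 : a * a = Complex.exp ((φ:ℂ) * Complex.I) := by
    rw [ha, ← Complex.exp_add]; congr 1; push_cast; ring
  have hI : Complex.I * Complex.I = -1 := Complex.I_mul_I
  have key : Complex.exp ((φ:ℂ) * Complex.I) - 1
      = a * (2 * Complex.I * Complex.sin (((φ/2 : ℝ):ℂ))) := by
    rw [Complex.sin]
    have hexp : Complex.exp (-(((φ/2 : ℝ):ℂ)) * Complex.I) = b := by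
      rw [hb]; congr 1; ring
    rw [hexp]
    linear_combination (a*a - a*b) * hI + (-1 : ℂ) * e2 + e1
  rw [key, norm_mul, ha, Complex.norm_exp_ofReal_mul_I, one_mul, norm_mul, norm_mul,
    Complex.norm_I, ← Complex.ofReal_sin, Complex.norm_real, Real.norm_eq_abs]
  norm_num

lemma abs_sin_pi_ge (δ : ℝ) : 2 * |δ - (round δ : ℤ)| ≤ |Real.sin (Real.pi * δ)| := by
  set r : ℤ := round δ with hr
  set e : ℝ := δ - r with he
  have habs : |e| ≤ 1/2 := by rw [he, hr]; exact abs_sub_round δ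
  have hsplit : Real.pi * δ = Real.pi * e + r * Real.pi := by rw [he]; ring
  have h0 : Real.sin (Real.pi * δ) = Real.sin (Real.pi * e) * Real.cos (r * Real.pi)
      + Real.cos (Real.pi * e) * Real.sin (r * Real.pi) := by
    rw [hsplit, Real.sin_add]
  have h1 : |Real.sin (Real.pi * δ)| = |Real.sin (Real.pi * e)| := by
    rw [h0, Real.sin_int_mul_pi, mul_zero, add_zero, abs_mul, Real.abs_cos_int_mul_pi, mul_one]
  rw [h1]
  have h2 : |Real.sin (Real.pi * e)| = Real.sin (Real.pi * |e|) := by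
    rcases abs_cases e with ⟨h, _⟩ | ⟨h, hneg⟩
    · rw [h, abs_of_nonneg]
      apply Real.sin_nonneg_of_nonneg_of_le_pi
      · positivity
      · nlinarith [Real.pi_pos, habs, abs_nonneg e]
    · have hs : Real.sin (Real.pi * e) ≤ 0 := by
        apply Real.sin_nonpos_of_nonpos_of_neg_pi_le
        · nlinarith [Real.pi_pos]
        · nlinarith [Real.pi_pos, habs, abs_nonneg e]
      rw [h, mul_neg, Real.sin_neg, abs_of_nonpos hs]
  rw [h2]
  have h3 := Real.mul_le_sin (x := Real.pi * |e|) (by positivity)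
    (by nlinarith [Real.pi_pos, abs_nonneg e])
  calc 2 * |e| = 2 / Real.pi * (Real.pi * |e|) := by
        field_simp
    _ ≤ Real.sin (Real.pi * |e|) := h3

lemma norm_sum_exp_le (N : ℕ) (δ : ℝ) (hd : δ - (round δ : ℤ) ≠ 0) :
    ‖∑ m : Fin N, Complex.exp (((2 * Real.pi * (m:ℕ) * δ : ℝ):ℂ) * Complex.I)‖
      ≤ 1 / (2 * |δ - (round δ : ℤ)|) := by
  set z : ℂ := Complex.exp (((2 * Real.pi * δ : ℝ):ℂ) * Complex.I) with hz
  have hterm : ∀ m : Fin N, Complex.exp (((2 * Real.pi * (m:ℕ) * δ : ℝ):ℂ) * Complex.I)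
      = z ^ (m:ℕ) := by
    intro m
    rw [hz, ← Complex.exp_nat_mul]
    congr 1
    push_cast
    ring
  have hsum : ∑ m : Fin N, Complex.exp (((2 * Real.pi * (m:ℕ) * δ : ℝ):ℂ) * Complex.I)
      = ∑ i ∈ Finset.range N, z ^ i := by
    simp_rw [hterm]
    exact Fin.sum_univ_eq_sum_range (fun i => z ^ i) N
  have hz1 : z ≠ 1 := by
    intro hcon
    rw [hz, Complex.exp_eq_one_iff] at hcon
    obtain ⟨k, hk⟩ := hcon
    apply hd
    have : ((2 * Real.pi * δ : ℝ) : ℂ) = ((2 * Real.pi * (k:ℝ) : ℝ) : ℂ) := by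
      have h' : ((2 * Real.pi * δ : ℝ):ℂ) * Complex.I = ((2 * Real.pi * (k:ℝ) : ℝ):ℂ) * Complex.I := by
        push_cast at hk ⊢
        linear_combination hk
      exact mul_right_cancel₀ Complex.I_ne_zero h'
    have h2 : 2 * Real.pi * δ = 2 * Real.pi * (k:ℝ) := by exact_mod_cast this
    have hδ : δ = (k:ℝ) := by
      have := Real.pi_ne_zero
      field_simp at h2
      tauto
    have : round δ = k := by rw [hδ]; simp
    rw [this, hδ]
    ring
  have hnorm_z : ‖z‖ = 1 := by rw [hz]; exact Complex.norm_exp_ofReal_mul_I _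
  have hgeom : ∑ i ∈ Finset.range N, z ^ i = (z ^ N - 1) / (z - 1) := geom_sum_eq hz1 N
  have hlow : 4 * |δ - (round δ : ℤ)| ≤ ‖z - 1‖ := by
    have := norm_exp_mul_I_sub_one (2 * Real.pi * δ)
    have h2 : (2 * Real.pi * δ) / 2 = Real.pi * δ := by ring
    rw [h2] at this
    rw [hz, this]
    have := abs_sin_pi_ge δ
    linarith
  have habs_pos : 0 < |δ - (round δ : ℤ)| := abs_pos.mpr hd
  rw [hsum, hgeom, norm_div]
  have hup : ‖z ^ N - 1‖ ≤ 2 := by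
    calc ‖z ^ N - 1‖ ≤ ‖z ^ N‖ + ‖(1:ℂ)‖ := norm_sub_le _ _
      _ = 2 := by rw [norm_pow, hnorm_z]; norm_num
  have hz1' : (0:ℝ) < ‖z - 1‖ := by
    rw [norm_pos_iff]
    exact sub_ne_zero.mpr hz1
  rw [div_le_div_iff₀ hz1' (by positivity)]
  calc ‖z ^ N - 1‖ * (2 * |δ - (round δ : ℤ)|) ≤ 2 * (2 * |δ - (round δ : ℤ)|) := by
        apply mul_le_mul_of_nonneg_right hup; positivity
    _ = 4 * |δ - (round δ : ℤ)| := by ring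
    _ ≤ ‖z - 1‖ := hlow
    _ = 1 * ‖z - 1‖ := by ring

def n0 (N : ℕ) (θ : ℝ) : ℤ := round ((N:ℝ) * θ)

def resid (N : ℕ) (θ : ℝ) (j : Fin N) : ℕ := (((j:ℤ) - n0 N θ) % (N:ℤ)).toNat

def kd (N : ℕ) (θ : ℝ) (j : Fin N) : ℕ := min (resid N θ j) (N - resid N θ j)

lemma resid_lemmas {N : ℕ} (hN : 0 < N) (θ : ℝ) (j : Fin N) :
    (resid N θ j : ℤ) = ((j:ℤ) - n0 N θ) % (N:ℤ) ∧ resid N θ j < N := by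
  have hm0 : 0 ≤ ((j:ℤ) - n0 N θ) % (N:ℤ) := Int.emod_nonneg _ (by exact_mod_cast hN.ne')
  have hmlt : ((j:ℤ) - n0 N θ) % (N:ℤ) < N := Int.emod_lt_of_pos _ (by exact_mod_cast hN)
  constructor
  · exact Int.toNat_of_nonneg hm0
  · rw [resid]; omega

lemma resid_injective {N : ℕ} (hN : 0 < N) (θ : ℝ) : Function.Injective (resid N θ) := by
  intro j1 j2 h
  have h1 := resid_lemmas hN θ j1
  have h2 := resid_lemmas hN θ j2
  have key : ((j1:ℤ) - n0 N θ) % (N:ℤ) = ((j2:ℤ) - n0 N θ) % (N:ℤ) := by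
    rw [← h1.1, ← h2.1, h]
  have hdvd : (N:ℤ) ∣ ((j2:ℤ) - (j1:ℤ)) := by
    have hmod : Int.ModEq (N:ℤ) ((j1:ℤ) - n0 N θ) ((j2:ℤ) - n0 N θ) := key
    have h4 := hmod.dvd
    simpa using h4
  have hj1 : (j1:ℤ) < N := by exact_mod_cast j1.isLt
  have hj2 : (j2:ℤ) < N := by exact_mod_cast j2.isLt
  obtain ⟨c, hc⟩ := hdvd
  have : (j1:ℤ) = (j2:ℤ) := by
    rcases lt_trichotomy c 0 with h | h | h
    · have hle : (N:ℤ) * c ≤ -(N:ℤ) := by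
        have h5 := mul_le_mul_of_nonneg_left (show c ≤ -1 by omega) (show (0:ℤ) ≤ N by positivity)
        linarith
      omega
    · have hz0 : (N:ℤ) * c = 0 := by rw [h]; ring
      omega
    · have hle : (N:ℤ) ≤ (N:ℤ) * c := by
        have h5 := mul_le_mul_of_nonneg_left (show (1:ℤ) ≤ c by omega) (show (0:ℤ) ≤ N by positivity)
        linarith
      omega
  exact Fin.ext (by exact_mod_cast this)

lemma kd_le_natAbs {N : ℕ} (hN : 0 < N) (θ : ℝ) (j : Fin N) (c : ℤ) :
    kd N θ j ≤ ((j:ℤ) - n0 N θ - N * c).natAbs := by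
  obtain ⟨hres, hlt⟩ := resid_lemmas hN θ j
  have hdiv := Int.emod_add_mul_ediv ((j:ℤ) - n0 N θ) (N:ℤ)
  set q := ((j:ℤ) - n0 N θ) / (N:ℤ) with hq
  set t := q - c with ht
  have hx : (j:ℤ) - n0 N θ - N * c = (resid N θ j : ℤ) + N * t := by
    rw [hres, ht]; linarith [hdiv]
  have hkd1 : kd N θ j ≤ resid N θ j := min_le_left _ _
  have hkd2 : kd N θ j ≤ N - resid N θ j := min_le_right _ _
  set s := (N:ℤ) * t with hs
  rcases lt_trichotomy t 0 with h | h | h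
  · have hle : s ≤ -(N:ℤ) := by
      have h5 := mul_le_mul_of_nonneg_left (show t ≤ -1 by omega) (show (0:ℤ) ≤ N by positivity)
      rw [hs]; linarith
    omega
  · have hz0 : s = 0 := by rw [hs, h]; ring
    omega
  · have hle : (N:ℤ) ≤ s := by
      have h5 := mul_le_mul_of_nonneg_left (show (1:ℤ) ≤ t by omega) (show (0:ℤ) ≤ N by positivity)
      rw [hs]; linarith
    omega

lemma exists_natAbs_lt {N K : ℕ} (hN : 0 < N) (θ : ℝ) (j : Fin N) (h : kd N θ j < K) :
    ∃ c : ℤ, ((j:ℤ) - n0 N θ - N * c).natAbs < K := by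
  obtain ⟨hres, hlt⟩ := resid_lemmas hN θ j
  have hdiv := Int.emod_add_mul_ediv ((j:ℤ) - n0 N θ) (N:ℤ)
  set q := ((j:ℤ) - n0 N θ) / (N:ℤ) with hq
  rw [kd] at h
  rcases Nat.lt_or_ge (resid N θ j) K with h1 | h1
  · refine ⟨q, ?_⟩
    have hx : (j:ℤ) - n0 N θ - N * q = (resid N θ j : ℤ) := by
      rw [hres]; linarith [hdiv]
    omega
  · refine ⟨q + 1, ?_⟩
    have hx : (j:ℤ) - n0 N θ - N * (q + 1) = (resid N θ j : ℤ) - N := by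
      rw [hres]; push_cast; linarith [hdiv]
    omega

def win (N K : ℕ) (θ : ℝ) : Finset (Fin N) := Finset.univ.filter (fun j => kd N θ j < K)

lemma fiber_card_le {N : ℕ} (hN : 0 < N) (θ : ℝ) (k : ℕ) :
    (Finset.univ.filter (fun j : Fin N => kd N θ j = k)).card ≤ 2 := by
  have h : (Finset.univ.filter (fun j : Fin N => kd N θ j = k)).card
      ≤ ({k, N - k} : Finset ℕ).card := by
    apply Finset.card_le_card_of_injOn (resid N θ)
    · intro j hj
      simp only [Finset.mem_coe, Finset.mem_filter] at hj
      have h2 := hj.2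
      have h3 := (resid_lemmas hN θ j).2
      simp only [Finset.mem_coe, Finset.mem_insert, Finset.mem_singleton]
      rw [kd] at h2
      omega
    · intro a _ b _ hab; exact resid_injective hN θ hab
  apply h.trans
  apply (Finset.card_insert_le _ _).trans
  simp

lemma win_card_le {N K : ℕ} (hN : 0 < N) (θ : ℝ) : (win N K θ).card ≤ 2 * K := by
  have h : (win N K θ).card ≤ (Finset.range K ∪ Finset.Ico (N - K) N).card := by
    apply Finset.card_le_card_of_injOn (resid N θ)
    · intro j hj
      simp only [win, Finset.mem_coe, Finset.mem_filter] at hj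
      have h2 := hj.2
      have h3 := (resid_lemmas hN θ j).2
      simp only [Finset.mem_coe, Finset.mem_union, Finset.mem_range, Finset.mem_Ico]
      rw [kd] at h2
      omega
    · intro a _ b _ hab; exact resid_injective hN θ hab
  apply h.trans
  have h2 := Finset.card_union_le (Finset.range K) (Finset.Ico (N - K) N)
  rw [Finset.card_range, Nat.card_Ico] at h2
  omega

lemma wrapDist_le {x y : ℝ} (hx : x ∈ Set.Ico (0:ℝ) 1) (hy : y ∈ Set.Ico (0:ℝ) 1) (c : ℤ) :
    wrapDist x y ≤ |x - y - c| := by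
  obtain ⟨hx0, hx1⟩ := hx; obtain ⟨hy0, hy1⟩ := hy
  rw [wrapDist]
  rcases eq_or_ne c 0 with rfl | hc
  · simpa using min_le_left |x - y| (1 - |x - y|)
  · have h1 : (1:ℝ) ≤ |(c:ℝ)| := by exact_mod_cast Int.one_le_abs hc
    have h2 : 1 - |x - y| ≤ |x - y - c| := by
      have h3 := abs_sub_abs_le_abs_sub ((c:ℝ)) (x - y)
      have h4 : |(c:ℝ) - (x - y)| = |x - y - (c:ℝ)| := abs_sub_comm _ _
      rw [h4] at h3
      linarith
    exact le_trans (min_le_right _ _) h2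

lemma natAbs_lt_real {a : ℤ} {K : ℕ} (h : a.natAbs < K) : |(a:ℝ)| ≤ (K:ℝ) - 1 := by
  have h2 : |a| ≤ (K:ℤ) - 1 := by rw [Int.abs_eq_natAbs]; omega
  have h3 : |((a:ℤ):ℝ)| ≤ ((K:ℤ):ℝ) - 1 := by
    rw [← Int.cast_abs]
    exact_mod_cast h2
  exact_mod_cast h3

lemma win_disjoint {N K : ℕ} (hN : 0 < N) (hK : 0 < K) {x y : ℝ}
    (hx : x ∈ Set.Ico (0:ℝ) 1) (hy : y ∈ Set.Ico (0:ℝ) 1)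
    (hsep : (2 * K : ℝ) / N ≤ wrapDist x y) {j : Fin N}
    (hjx : j ∈ win N K x) (hjy : j ∈ win N K y) : False := by
  rw [win, Finset.mem_filter] at hjx hjy
  obtain ⟨cx, hcx⟩ := exists_natAbs_lt hN x j hjx.2
  obtain ⟨cy, hcy⟩ := exists_natAbs_lt hN y j hjy.2
  have hax := natAbs_lt_real hcx
  have hay := natAbs_lt_real hcy
  push_cast at hax hay
  have hrx : |(N:ℝ) * x - (n0 N x : ℝ)| ≤ 1/2 := by
    rw [n0]; exact abs_sub_round _
  have hry : |(N:ℝ) * y - (n0 N y : ℝ)| ≤ 1/2 := by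
    rw [n0]; exact abs_sub_round _
  set c : ℤ := cy - cx with hcdef
  have hkey : |(N:ℝ) * (x - y - (c:ℝ))| ≤ 2 * K - 1 := by
    have hiden : (N:ℝ) * (x - y - (c:ℝ)) =
        ((N:ℝ) * x - (n0 N x : ℝ)) - ((N:ℝ) * y - (n0 N y : ℝ))
        - (((j:ℕ):ℝ) - (n0 N x : ℝ) - (N:ℝ) * (cx:ℝ))
        + (((j:ℕ):ℝ) - (n0 N y : ℝ) - (N:ℝ) * (cy:ℝ)) := by
      rw [hcdef]; push_cast; ring
    rw [hiden]
    have hK1 : (1:ℝ) ≤ K := by exact_mod_cast hK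
    calc |_| ≤ |(N:ℝ) * x - (n0 N x : ℝ)| + |(N:ℝ) * y - (n0 N y : ℝ)|
        + |((j:ℕ):ℝ) - (n0 N x : ℝ) - (N:ℝ) * (cx:ℝ)|
        + |((j:ℕ):ℝ) - (n0 N y : ℝ) - (N:ℝ) * (cy:ℝ)| := by
          apply (abs_add_le _ _).trans
          gcongr
          apply (abs_sub _ _).trans
          gcongr
          exact abs_sub _ _
      _ ≤ 2 * K - 1 := by linarith
  have hwd := wrapDist_le hx hy c
  have hNpos : (0:ℝ) < N := by exact_mod_cast hN
  have h5 : (2 * K : ℝ) ≤ |x - y - (c:ℝ)| * N := by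
    rw [div_le_iff₀ hNpos] at hsep
    calc (2 * K : ℝ) ≤ wrapDist x y * N := hsep
      _ ≤ |x - y - (c:ℝ)| * N := by
          apply mul_le_mul_of_nonneg_right hwd hNpos.le
  rw [abs_mul, abs_of_nonneg hNpos.le] at hkey
  nlinarith

lemma norm_uVec_le_inv_kd {N : ℕ} (hN : 0 < N) (θ : ℝ) (j : Fin N) (h1 : 1 ≤ kd N θ j) :
    ‖uVec N θ j‖ ≤ ((kd N θ j : ℝ))⁻¹ := by
  set δ : ℝ := ((j:ℕ):ℝ)/N - θ with hδ
  set r : ℤ := round δ with hr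
  have hNpos : (0:ℝ) < N := by exact_mod_cast hN
  -- |N δ - N r| ≥ kd - 1/2
  have hint := kd_le_natAbs hN θ j r
  have hint' : (kd N θ j : ℝ) ≤ |((j:ℕ):ℝ) - (n0 N θ : ℝ) - (N:ℝ) * (r:ℝ)| := by
    have h2 : ((((j:ℤ) - n0 N θ - N * r).natAbs : ℤ) : ℝ) = |(((j:ℤ) - n0 N θ - N * r : ℤ) : ℝ)| := by
      rw [← Int.cast_abs]
      norm_cast
    have h3 : (kd N θ j : ℝ) ≤ ((((j:ℤ) - n0 N θ - N * r).natAbs : ℤ) : ℝ) := by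
      exact_mod_cast hint
    rw [h2] at h3
    convert h3 using 2
    push_cast
    ring
  have hround : |(N:ℝ) * θ - (n0 N θ : ℝ)| ≤ 1/2 := by rw [n0]; exact abs_sub_round _
  have hNd : (kd N θ j : ℝ) - 1/2 ≤ (N:ℝ) * |δ - (r:ℝ)| := by
    have hiden : (N:ℝ) * (δ - (r:ℝ)) =
        (((j:ℕ):ℝ) - (n0 N θ : ℝ) - (N:ℝ) * (r:ℝ)) - ((N:ℝ) * θ - (n0 N θ : ℝ)) := by
      rw [hδ]; field_simp; ring
    have h4 : |((j:ℕ):ℝ) - (n0 N θ : ℝ) - (N:ℝ) * (r:ℝ)| - |(N:ℝ) * θ - (n0 N θ : ℝ)|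
        ≤ |(N:ℝ) * (δ - (r:ℝ))| := by
      rw [hiden]
      exact abs_sub_abs_le_abs_sub _ _
    rw [abs_mul, abs_of_nonneg hNpos.le] at h4
    linarith
  have hkd1 : (1:ℝ) ≤ (kd N θ j : ℝ) := by exact_mod_cast h1
  have hdpos : (0:ℝ) < |δ - (r:ℝ)| := by
    by_contra h
    push_neg at h
    have : |δ - (r:ℝ)| = 0 := le_antisymm h (abs_nonneg _)
    rw [this, mul_zero] at hNd
    linarith
  have hdne : δ - (r:ℝ) ≠ 0 := by
    intro h; rw [h] at hdpos; simp at hdpos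
  have hbound := norm_sum_exp_le N δ (by rw [← hr]; exact hdne)
  rw [← hr] at hbound
  have huv : ‖uVec N θ j‖ ≤ (1/(N:ℝ)) * (1 / (2 * |δ - (r:ℝ)|)) := by
    rw [uVec_apply, norm_mul]
    have hn1 : ‖(1 / (N : ℂ))‖ = 1 / (N:ℝ) := by simp
    rw [hn1]
    apply mul_le_mul_of_nonneg_left _ (by positivity)
    exact hbound
  apply huv.trans
  rw [div_mul_div_comm, one_mul]
  rw [div_le_iff₀ (by positivity)]
  have h6 : (kd N θ j : ℝ) ≤ 2 * (kd N θ j : ℝ) - 1 := by linarith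
  calc (1:ℝ) = ((kd N θ j : ℝ))⁻¹ * (kd N θ j : ℝ) := by
        field_simp
    _ ≤ ((kd N θ j : ℝ))⁻¹ * ((N:ℝ) * (2 * |δ - (r:ℝ)|)) := by
        apply mul_le_mul_of_nonneg_left _ (by positivity)
        calc (kd N θ j : ℝ) ≤ 2 * (kd N θ j : ℝ) - 1 := h6
          _ ≤ (N:ℝ) * (2 * |δ - (r:ℝ)|) := by linarith

lemma sum_sq_le {N : ℕ} (hN : 0 < N) (θ : ℝ) (s : Finset (Fin N)) (g : ℕ → ℝ)
    (hg : ∀ k, 0 ≤ g k) (hb : ∀ j ∈ s, ‖uVec N θ j‖^2 ≤ g (kd N θ j)) :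
    ∑ j ∈ s, ‖uVec N θ j‖^2 ≤ 2 * ∑ k ∈ Finset.range (N+1), g k := by
  have hmap : ∀ j ∈ s, kd N θ j ∈ Finset.range (N+1) := by
    intro j hj; simp only [Finset.mem_range]
    have := (resid_lemmas hN θ j).2; rw [kd]; omega
  calc ∑ j ∈ s, ‖uVec N θ j‖^2 ≤ ∑ j ∈ s, g (kd N θ j) := Finset.sum_le_sum hb
    _ = ∑ k ∈ Finset.range (N+1), ∑ j ∈ s.filter (fun j => kd N θ j = k), g (kd N θ j) :=
        (Finset.sum_fiberwise_of_maps_to hmap _).symm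
    _ ≤ 2 * ∑ k ∈ Finset.range (N+1), g k := by
        rw [Finset.mul_sum]
        apply Finset.sum_le_sum
        intro k _
        calc ∑ j ∈ s.filter (fun j => kd N θ j = k), g (kd N θ j)
            = ∑ j ∈ s.filter (fun j => kd N θ j = k), g k := by
              apply Finset.sum_congr rfl; intro j hj
              simp only [Finset.mem_filter] at hj; rw [hj.2]
          _ = ((s.filter (fun j => kd N θ j = k)).card : ℝ) * g k := by
              rw [Finset.sum_const, nsmul_eq_mul]
          _ ≤ 2 * g k := by
              apply mul_le_mul_of_nonneg_right _ (hg k)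
              have hcard : (s.filter (fun j => kd N θ j = k)).card ≤ 2 := by
                apply le_trans (Finset.card_le_card _) (fiber_card_le hN θ k)
                intro j hj
                simp only [Finset.mem_filter] at hj ⊢
                exact ⟨Finset.mem_univ _, hj.2⟩
              exact_mod_cast hcard

lemma sum_sq_uVec_le {N : ℕ} (hN : 0 < N) (θ : ℝ) :
    ∑ j : Fin N, ‖uVec N θ j‖^2 ≤ 6 := by
  set g : ℕ → ℝ := fun k => if k = 0 then 1 else ((k:ℝ)^2)⁻¹ with hg
  have hgnn : ∀ k, 0 ≤ g k := by
    intro k; rw [hg]; dsimp only; split <;> positivity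
  have hb : ∀ j ∈ (Finset.univ : Finset (Fin N)), ‖uVec N θ j‖^2 ≤ g (kd N θ j) := by
    intro j _
    rcases Nat.eq_zero_or_pos (kd N θ j) with h | h
    · have h1 := norm_uVec_le_one hN θ j
      have h0 := norm_nonneg (uVec N θ j)
      have hgv : g (kd N θ j) = 1 := by rw [hg]; simp [h]
      rw [hgv]; nlinarith
    · have hgv : g (kd N θ j) = (((kd N θ j : ℝ))^2)⁻¹ := by
        rw [hg]; simp only; rw [if_neg (by omega)]
      rw [hgv]
      have h2 := norm_uVec_le_inv_kd hN θ j h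
      have h3 : (0:ℝ) < (kd N θ j : ℝ) := by exact_mod_cast h
      have h0 := norm_nonneg (uVec N θ j)
      have h4 : (((kd N θ j : ℝ))⁻¹)^2 = (((kd N θ j : ℝ))^2)⁻¹ := by rw [inv_pow]
      nlinarith
  apply le_trans (sum_sq_le hN θ Finset.univ g hgnn hb)
  have hsplit : Finset.range (N+1) = insert 0 (Finset.Ioo 0 (N+1)) := by
    ext k; simp only [Finset.mem_range, Finset.mem_insert, Finset.mem_Ioo]; omega
  rw [hsplit, Finset.sum_insert (by simp)]
  have h1 : g 0 = 1 := by simp [hg]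
  have h2 : ∑ k ∈ Finset.Ioo 0 (N+1), g k = ∑ k ∈ Finset.Ioo 0 (N+1), ((k:ℝ)^2)⁻¹ := by
    apply Finset.sum_congr rfl; intro k hk
    simp only [Finset.mem_Ioo] at hk
    rw [hg]; dsimp only; rw [if_neg (by omega)]
  have h3 : ∑ k ∈ Finset.Ioo 0 (N+1), ((k:ℝ)^2)⁻¹ ≤ 2 / (0 + 1 : ℝ) := by
    have := sum_Ioo_inv_sq_le (α := ℝ) 0 (N+1)
    push_cast at this ⊢
    convert this using 2
  rw [h1, h2]
  norm_num at h3 ⊢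
  linarith

lemma sum_sq_uVec_tail_le {N K : ℕ} (hN : 0 < N) (hK : 0 < K) (θ : ℝ) :
    ∑ j ∈ (win N K θ)ᶜ, ‖uVec N θ j‖^2 ≤ 4 / (K : ℝ) := by
  set g : ℕ → ℝ := fun k => if K ≤ k then ((k:ℝ)^2)⁻¹ else 0 with hg
  have hgnn : ∀ k, 0 ≤ g k := by
    intro k; rw [hg]; dsimp only; split <;> positivity
  have hb : ∀ j ∈ (win N K θ)ᶜ, ‖uVec N θ j‖^2 ≤ g (kd N θ j) := by
    intro j hj
    rw [Finset.mem_compl, win, Finset.mem_filter] at hj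
    have hge : K ≤ kd N θ j := by
      by_contra h
      exact hj ⟨Finset.mem_univ _, by omega⟩
    have hgv : g (kd N θ j) = (((kd N θ j : ℝ))^2)⁻¹ := by
      rw [hg]; simp only; rw [if_pos hge]
    rw [hgv]
    have h2 := norm_uVec_le_inv_kd hN θ j (by omega)
    have h3 : (0:ℝ) < (kd N θ j : ℝ) := by exact_mod_cast lt_of_lt_of_le hK hge
    have h0 := norm_nonneg (uVec N θ j)
    have h4 : (((kd N θ j : ℝ))⁻¹)^2 = (((kd N θ j : ℝ))^2)⁻¹ := by rw [inv_pow]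
    nlinarith
  apply le_trans (sum_sq_le hN θ _ g hgnn hb)
  have h4 : ∑ k ∈ Finset.range (N+1), g k ≤ ∑ k ∈ Finset.Ioo (K-1) (N+1), ((k:ℝ)^2)⁻¹ := by
    rw [hg]
    rw [← Finset.sum_filter]
    apply Finset.sum_le_sum_of_subset_of_nonneg
    · intro k hk
      simp only [Finset.mem_filter, Finset.mem_range] at hk
      simp only [Finset.mem_Ioo]
      omega
    · intro k _ _; positivity
  have h5 : ∑ k ∈ Finset.Ioo (K-1) (N+1), ((k:ℝ)^2)⁻¹ ≤ 2 / ((K-1 : ℕ) + 1 : ℝ) := by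
    have := sum_Ioo_inv_sq_le (α := ℝ) (K-1) (N+1)
    push_cast at this ⊢
    convert this using 2
  have h6 : ((K-1 : ℕ) : ℝ) + 1 = (K : ℝ) := by
    have : (K - 1 : ℕ) + 1 = K := by omega
    exact_mod_cast congrArg (Nat.cast : ℕ → ℝ) this
  rw [h6] at h5
  calc 2 * ∑ k ∈ Finset.range (N+1), g k ≤ 2 * (2 / (K:ℝ)) := by
        apply mul_le_mul_of_nonneg_left (le_trans h4 h5) (by norm_num)
    _ = 4 / (K:ℝ) := by ring

attribute [local instance] Matrix.frobeniusSeminormedAddCommGroup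
  Matrix.frobeniusNormedAddCommGroup

lemma frob_sqrt {N : ℕ} (B : Matrix (Fin N) (Fin N) ℂ) :
    Real.sqrt (∑ i, ∑ j, ‖B i j‖^2) = ‖B‖ := by
  rw [Matrix.frobenius_norm_def, Real.sqrt_eq_rpow]
  congr 1
  apply Finset.sum_congr rfl; intro i _
  apply Finset.sum_congr rfl; intro j _
  rw [Real.rpow_two]

lemma rank1_norm {N : ℕ} (x y : Fin N → ℂ) :
    ‖(Matrix.of fun i j => x i * (starRingEnd ℂ) (y j) : Matrix (Fin N) (Fin N) ℂ)‖
      = Real.sqrt (∑ i, ‖x i‖^2) * Real.sqrt (∑ j, ‖y j‖^2) := by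
  rw [← frob_sqrt]
  rw [← Real.sqrt_mul (by positivity)]
  congr 1
  rw [Finset.sum_mul_sum]
  apply Finset.sum_congr rfl; intro i _
  apply Finset.sum_congr rfl; intro j _
  rw [Matrix.of_apply, norm_mul, mul_pow]
  congr 2
  exact RCLike.norm_conj _

lemma sqrt_four_div {K : ℕ} (hK : 0 < K) : Real.sqrt (4 / (K:ℝ)) = 2 / Real.sqrt K := by
  rw [Real.sqrt_div (by norm_num : (0:ℝ) ≤ 4)]
  congr 1
  rw [show (4:ℝ) = 2^2 by norm_num]
  exact Real.sqrt_sq (by norm_num)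

lemma sum_compl_ite {α : Type*} [Fintype α] [DecidableEq α] (s : Finset α) (f : α → ℝ) :
    ∑ i : α, (if i ∈ s then (0:ℝ) else f i) = ∑ i ∈ sᶜ, f i := by
  rw [← Finset.sum_subset (Finset.subset_univ sᶜ) (fun x _ hx => by
        rw [Finset.mem_compl, not_not] at hx
        simp [hx])]
  apply Finset.sum_congr rfl
  intro i hi
  rw [Finset.mem_compl] at hi
  simp [hi]

lemma perp_bound {N Kθ Kτ : ℕ} (hN : 0 < N) (hKθ : 0 < Kθ) (hKτ : 0 < Kτ) (c : ℂ) (t th : ℝ) :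
    ‖(Matrix.of fun i j => c * uVec N t i * (starRingEnd ℂ) (uVec N th j)
        - (c * (if i ∈ win N Kτ t then uVec N t i else 0))
            * (starRingEnd ℂ) (if j ∈ win N Kθ th then uVec N th j else 0)
        : Matrix (Fin N) (Fin N) ℂ)‖
      ≤ Real.sqrt 6 * 2 * ‖c‖ * (1/Real.sqrt Kθ + 1/Real.sqrt Kτ) := by
  set x : Fin N → ℂ := fun i => c * uVec N t i with hx
  set x' : Fin N → ℂ := fun i => c * (if i ∈ win N Kτ t then uVec N t i else 0) with hx'
  set y : Fin N → ℂ := fun j => uVec N th j with hy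
  set y' : Fin N → ℂ := fun j => (if j ∈ win N Kθ th then uVec N th j else 0) with hy'
  have hsplit : (Matrix.of fun i j => x i * (starRingEnd ℂ) (y j) - x' i * (starRingEnd ℂ) (y' j)
        : Matrix (Fin N) (Fin N) ℂ)
      = (Matrix.of fun i j => (x i - x' i) * (starRingEnd ℂ) (y j) : Matrix (Fin N) (Fin N) ℂ)
        + (Matrix.of fun i j => x' i * (starRingEnd ℂ) ((y - y') j) : Matrix (Fin N) (Fin N) ℂ) := by
    ext i j
    simp only [Matrix.add_apply, Matrix.of_apply, Pi.sub_apply, map_sub]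
    ring
  calc ‖(Matrix.of fun i j => x i * (starRingEnd ℂ) (y j) - x' i * (starRingEnd ℂ) (y' j)
        : Matrix (Fin N) (Fin N) ℂ)‖
      ≤ ‖(Matrix.of fun i j => (x i - x' i) * (starRingEnd ℂ) (y j) : Matrix (Fin N) (Fin N) ℂ)‖
        + ‖(Matrix.of fun i j => x' i * (starRingEnd ℂ) ((y - y') j) : Matrix (Fin N) (Fin N) ℂ)‖ := by
        rw [hsplit]; exact norm_add_le _ _
    _ ≤ ‖c‖ * (2 / Real.sqrt Kτ) * Real.sqrt 6 + (‖c‖ * Real.sqrt 6) * (2 / Real.sqrt Kθ) := by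
        have e1 : ‖(Matrix.of fun i j => (x i - x' i) * (starRingEnd ℂ) (y j)
            : Matrix (Fin N) (Fin N) ℂ)‖
            = Real.sqrt (∑ i, ‖x i - x' i‖^2) * Real.sqrt (∑ j, ‖y j‖^2) :=
          rank1_norm (fun i => x i - x' i) y
        have e2 : ‖(Matrix.of fun i j => x' i * (starRingEnd ℂ) ((y - y') j)
            : Matrix (Fin N) (Fin N) ℂ)‖
            = Real.sqrt (∑ i, ‖x' i‖^2) * Real.sqrt (∑ j, ‖(y - y') j‖^2) :=
          rank1_norm x' (y - y')
        rw [e1, e2]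
        have hb1 : Real.sqrt (∑ i, ‖x i - x' i‖^2) ≤ ‖c‖ * (2 / Real.sqrt Kτ) := by
          have hsum : ∑ i, ‖x i - x' i‖^2 = ‖c‖^2 * ∑ i ∈ (win N Kτ t)ᶜ, ‖uVec N t i‖^2 := by
            rw [Finset.mul_sum, ← sum_compl_ite (win N Kτ t) (fun i => ‖c‖^2 * ‖uVec N t i‖^2)]
            apply Finset.sum_congr rfl
            intro i _
            rw [hx, hx']
            by_cases h : i ∈ win N Kτ t
            · simp [h]
            · simp only [h, if_neg, not_false_iff]
              rw [mul_zero, sub_zero, norm_mul, mul_pow]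
          rw [hsum]
          rw [Real.sqrt_mul (by positivity), Real.sqrt_sq (norm_nonneg c)]
          apply mul_le_mul_of_nonneg_left _ (norm_nonneg c)
          rw [← sqrt_four_div hKτ]
          exact Real.sqrt_le_sqrt (sum_sq_uVec_tail_le hN hKτ t)
        have hb2 : Real.sqrt (∑ j, ‖y j‖^2) ≤ Real.sqrt 6 := by
          apply Real.sqrt_le_sqrt
          rw [hy]
          exact sum_sq_uVec_le hN th
        have hb3 : Real.sqrt (∑ i, ‖x' i‖^2) ≤ ‖c‖ * Real.sqrt 6 := by
          have hsum : ∑ i, ‖x' i‖^2 ≤ ‖c‖^2 * 6 := by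
            calc ∑ i, ‖x' i‖^2 ≤ ∑ i : Fin N, ‖c‖^2 * ‖uVec N t i‖^2 := by
                  apply Finset.sum_le_sum
                  intro i _
                  rw [hx']
                  by_cases h : i ∈ win N Kτ t
                  · simp only [h, if_pos]; rw [norm_mul, mul_pow]
                  · simp only [h, if_neg, not_false_iff]
                    rw [mul_zero, norm_zero]
                    have hnn : (0:ℝ) ≤ ‖c‖^2 * ‖uVec N t i‖^2 := by positivity
                    simpa using hnn
              _ = ‖c‖^2 * ∑ i : Fin N, ‖uVec N t i‖^2 := by rw [Finset.mul_sum]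
              _ ≤ ‖c‖^2 * 6 := by
                  apply mul_le_mul_of_nonneg_left (sum_sq_uVec_le hN t) (by positivity)
          calc Real.sqrt (∑ i, ‖x' i‖^2) ≤ Real.sqrt (‖c‖^2 * 6) := Real.sqrt_le_sqrt hsum
            _ = ‖c‖ * Real.sqrt 6 := by
                rw [Real.sqrt_mul (by positivity), Real.sqrt_sq (norm_nonneg c)]
        have hb4 : Real.sqrt (∑ j, ‖(y - y') j‖^2) ≤ 2 / Real.sqrt Kθ := by
          have hsum : ∑ j, ‖(y - y') j‖^2 = ∑ j ∈ (win N Kθ th)ᶜ, ‖uVec N th j‖^2 := by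
            rw [← sum_compl_ite (win N Kθ th) (fun j => ‖uVec N th j‖^2)]
            apply Finset.sum_congr rfl
            intro j _
            rw [Pi.sub_apply, hy, hy']
            by_cases h : j ∈ win N Kθ th
            · simp [h]
            · simp only [h, if_neg, not_false_iff]
              rw [sub_zero]
          rw [hsum, ← sqrt_four_div hKθ]
          exact Real.sqrt_le_sqrt (sum_sq_uVec_tail_le hN hKθ th)
        have h0 : (0:ℝ) ≤ Real.sqrt (∑ i, ‖x i - x' i‖^2) := Real.sqrt_nonneg _
        have h0' : (0:ℝ) ≤ Real.sqrt (∑ j, ‖(y - y') j‖^2) := Real.sqrt_nonneg _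
        have h1 : (0:ℝ) ≤ Real.sqrt (∑ j, ‖y j‖^2) := Real.sqrt_nonneg _
        have h2 : (0:ℝ) ≤ Real.sqrt (∑ i, ‖x' i‖^2) := Real.sqrt_nonneg _
        apply add_le_add
        · apply mul_le_mul hb1 hb2 h1 (by positivity)
        · apply mul_le_mul hb3 hb4 h0' (by positivity)
    _ = Real.sqrt 6 * 2 * ‖c‖ * (1/Real.sqrt Kθ + 1/Real.sqrt Kτ) := by
        field_simp
        ring

end OffgridAux

open OffgridAux

attribute [local instance] Matrix.frobeniusSeminormedAddCommGroup
  Matrix.frobeniusNormedAddCommGroup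

/-- (Sparse approximation of the off-grid delay-angular channel
representation, quadratic DFT case `M = N = D`.) Under the angular separation and
limited delays-per-angle conditions, `W = ∑_p ρ_p u_{τ_p} u_{θ_p}^H` can be approximated,
in Frobenius norm and up to an error `C (K_θ^{-1/2} + K_τ^{-1/2}) ∑_p |ρ_p|`, by a matrix
with at most `L(2K_θ+1)` nonzero columns, each with at most `K(2K_τ+1)` nonzero
entries. -/
theorem offgrid_hierarchical_sparse_approx :
    ∃ C : ℝ, 0 < C ∧
      ∀ (N L K Kθ Kτ : ℕ), 0 < N → 0 < L → 0 < K → 0 < Kθ → 0 < Kτ →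
      ∀ (τ θ : Fin L → ℝ),
        (∀ p, τ p ∈ Set.Ico (0 : ℝ) 1) → (∀ p, θ p ∈ Set.Ico (0 : ℝ) 1) →
        (∀ p q, θ p ≠ θ q → (2 * Kθ : ℝ) / N ≤ wrapDist (θ p) (θ q)) →
        (∀ p, {q : Fin L | θ q = θ p}.ncard ≤ K) →
        ∀ ρ : Fin L → ℂ,
        ∃ WΩ : Matrix (Fin N) (Fin N) ℂ,
          {j : Fin N | ∃ i : Fin N, WΩ i j ≠ 0}.ncard ≤ L * (2 * Kθ + 1) ∧
          (∀ j : Fin N, {i : Fin N | WΩ i j ≠ 0}.ncard ≤ K * (2 * Kτ + 1)) ∧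
          Real.sqrt (∑ i : Fin N, ∑ j : Fin N,
              ‖(∑ p, ρ p * uVec N (τ p) i * (starRingEnd ℂ) (uVec N (θ p) j)) - WΩ i j‖ ^ 2)
            ≤ C * (1 / Real.sqrt Kθ + 1 / Real.sqrt Kτ) * ∑ p, ‖ρ p‖ := by
  refine ⟨6, by norm_num, ?_⟩
  intro N L K Kθ Kτ hN hL hK hKθ hKτ τ θ hτm hθm hsep hcount ρ
  classical
  refine ⟨Matrix.of fun i j => ∑ p, (ρ p * (if i ∈ win N Kτ (τ p) then uVec N (τ p) i else 0))
      * (starRingEnd ℂ) (if j ∈ win N Kθ (θ p) then uVec N (θ p) j else 0), ?_, ?_, ?_⟩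
  · -- column sparsity
    have hsub : {j : Fin N | ∃ i : Fin N, (Matrix.of fun i j => ∑ p,
          (ρ p * (if i ∈ win N Kτ (τ p) then uVec N (τ p) i else 0))
          * (starRingEnd ℂ) (if j ∈ win N Kθ (θ p) then uVec N (θ p) j else 0)) i j ≠ 0}
        ⊆ ↑(Finset.univ.biUnion fun p : Fin L => win N Kθ (θ p)) := by
      intro j hj
      obtain ⟨i, hij⟩ := hj
      by_contra hjn
      apply hij
      simp only [Matrix.of_apply]
      apply Finset.sum_eq_zero
      intro p _
      have hz : (if j ∈ win N Kθ (θ p) then uVec N (θ p) j else 0) = 0 :=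
        if_neg (fun hmem =>
          hjn (Finset.mem_coe.mpr (Finset.mem_biUnion.mpr ⟨p, Finset.mem_univ _, hmem⟩)))
      rw [hz, map_zero, mul_zero]
    calc {j : Fin N | ∃ i : Fin N, _ ≠ 0}.ncard
        ≤ (↑(Finset.univ.biUnion fun p : Fin L => win N Kθ (θ p)) : Set (Fin N)).ncard :=
          Set.ncard_le_ncard hsub (Set.toFinite _)
      _ = (Finset.univ.biUnion fun p : Fin L => win N Kθ (θ p)).card := Set.ncard_coe_finset _
      _ ≤ ∑ p : Fin L, (win N Kθ (θ p)).card := Finset.card_biUnion_le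
      _ ≤ ∑ _p : Fin L, 2 * Kθ := Finset.sum_le_sum fun p _ => win_card_le hN (θ p)
      _ = L * (2 * Kθ) := by
          rw [Finset.sum_const, Finset.card_univ, Fintype.card_fin, smul_eq_mul]
      _ ≤ L * (2 * Kθ + 1) := Nat.mul_le_mul_left _ (by omega)
  · -- row sparsity
    intro j
    by_cases hex : ∃ p0 : Fin L, j ∈ win N Kθ (θ p0)
    · obtain ⟨p0, hp0⟩ := hex
      have hsub : {i : Fin N | (Matrix.of fun i j => ∑ p,
            (ρ p * (if i ∈ win N Kτ (τ p) then uVec N (τ p) i else 0))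
            * (starRingEnd ℂ) (if j ∈ win N Kθ (θ p) then uVec N (θ p) j else 0)) i j ≠ 0}
          ⊆ ↑((Finset.univ.filter fun q : Fin L => θ q = θ p0).biUnion
              fun q => win N Kτ (τ q)) := by
        intro i hi
        by_contra hin
        apply hi
        simp only [Matrix.of_apply]
        apply Finset.sum_eq_zero
        intro p _
        by_cases hθp : θ p = θ p0
        · have hz : (if i ∈ win N Kτ (τ p) then uVec N (τ p) i else 0) = 0 :=
            if_neg (fun hmem =>
              hin (Finset.mem_coe.mpr (Finset.mem_biUnion.mpr
                ⟨p, Finset.mem_filter.mpr ⟨Finset.mem_univ _, hθp⟩, hmem⟩)))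
          rw [hz, mul_zero, zero_mul]
        · have hz : (if j ∈ win N Kθ (θ p) then uVec N (θ p) j else 0) = 0 :=
            if_neg (fun hmem =>
              win_disjoint hN hKθ (hθm p) (hθm p0) (hsep p p0 hθp) hmem hp0)
          rw [hz, map_zero, mul_zero]
      calc {i : Fin N | _ ≠ 0}.ncard
          ≤ (↑((Finset.univ.filter fun q : Fin L => θ q = θ p0).biUnion
              fun q => win N Kτ (τ q)) : Set (Fin N)).ncard :=
            Set.ncard_le_ncard hsub (Set.toFinite _)
        _ = ((Finset.univ.filter fun q : Fin L => θ q = θ p0).biUnion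
              fun q => win N Kτ (τ q)).card := Set.ncard_coe_finset _
        _ ≤ ∑ q ∈ Finset.univ.filter fun q : Fin L => θ q = θ p0, (win N Kτ (τ q)).card :=
            Finset.card_biUnion_le
        _ ≤ ∑ _q ∈ Finset.univ.filter fun q : Fin L => θ q = θ p0, 2 * Kτ :=
            Finset.sum_le_sum fun q _ => win_card_le hN (τ q)
        _ = (Finset.univ.filter fun q : Fin L => θ q = θ p0).card * (2 * Kτ) := by
            rw [Finset.sum_const, smul_eq_mul]
        _ ≤ K * (2 * Kτ + 1) := by
            have hcard : (Finset.univ.filter fun q : Fin L => θ q = θ p0).card ≤ K := by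
              have h := hcount p0
              have hseteq : {q : Fin L | θ q = θ p0}
                  = ↑(Finset.univ.filter fun q : Fin L => θ q = θ p0) := by
                ext q; simp
              rw [hseteq, Set.ncard_coe_finset] at h
              exact h
            calc (Finset.univ.filter fun q : Fin L => θ q = θ p0).card * (2 * Kτ)
                ≤ K * (2 * Kτ) := Nat.mul_le_mul_right _ hcard
              _ ≤ K * (2 * Kτ + 1) := Nat.mul_le_mul_left _ (by omega)
    · push_neg at hex
      have hempty : {i : Fin N | (Matrix.of fun i j => ∑ p,
            (ρ p * (if i ∈ win N Kτ (τ p) then uVec N (τ p) i else 0))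
            * (starRingEnd ℂ) (if j ∈ win N Kθ (θ p) then uVec N (θ p) j else 0)) i j ≠ 0}
          = ∅ := by
        ext i
        simp only [Set.mem_setOf_eq, Set.mem_empty_iff_false, iff_false, not_not]
        simp only [Matrix.of_apply]
        apply Finset.sum_eq_zero
        intro p _
        have hz : (if j ∈ win N Kθ (θ p) then uVec N (θ p) j else 0) = 0 := if_neg (hex p)
        rw [hz, map_zero, mul_zero]
      rw [hempty]
      simp
  · -- Frobenius bound
    set A : Matrix (Fin N) (Fin N) ℂ := Matrix.of fun i j =>
      ∑ p, ρ p * uVec N (τ p) i * (starRingEnd ℂ) (uVec N (θ p) j) with hA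
    set B : Matrix (Fin N) (Fin N) ℂ := Matrix.of fun i j =>
      ∑ p, (ρ p * (if i ∈ win N Kτ (τ p) then uVec N (τ p) i else 0))
        * (starRingEnd ℂ) (if j ∈ win N Kθ (θ p) then uVec N (θ p) j else 0) with hB
    have hgoal_eq : Real.sqrt (∑ i : Fin N, ∑ j : Fin N,
        ‖(∑ p, ρ p * uVec N (τ p) i * (starRingEnd ℂ) (uVec N (θ p) j)) - B i j‖ ^ 2)
        = ‖A - B‖ := by
      rw [← frob_sqrt (A - B)]
      congr 1
    rw [hgoal_eq]
    have hdecomp : A - B = ∑ p : Fin L, (Matrix.of fun i j =>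
        ρ p * uVec N (τ p) i * (starRingEnd ℂ) (uVec N (θ p) j)
        - (ρ p * (if i ∈ win N Kτ (τ p) then uVec N (τ p) i else 0))
          * (starRingEnd ℂ) (if j ∈ win N Kθ (θ p) then uVec N (θ p) j else 0)
        : Matrix (Fin N) (Fin N) ℂ) := by
      ext i j
      simp only [Matrix.sub_apply, Matrix.sum_apply, Matrix.of_apply, hA, hB]
      rw [← Finset.sum_sub_distrib]
    rw [hdecomp]
    have hsqrt6 : Real.sqrt 6 * 2 ≤ 6 := by
      have h3 : Real.sqrt 6 ≤ 3 := by
        rw [show (3:ℝ) = Real.sqrt 9 by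
          rw [show (9:ℝ) = 3^2 by norm_num, Real.sqrt_sq (by norm_num : (0:ℝ) ≤ 3)]]
        exact Real.sqrt_le_sqrt (by norm_num)
      linarith
    calc ‖∑ p : Fin L, (Matrix.of fun i j =>
          ρ p * uVec N (τ p) i * (starRingEnd ℂ) (uVec N (θ p) j)
          - (ρ p * (if i ∈ win N Kτ (τ p) then uVec N (τ p) i else 0))
            * (starRingEnd ℂ) (if j ∈ win N Kθ (θ p) then uVec N (θ p) j else 0)
          : Matrix (Fin N) (Fin N) ℂ)‖
        ≤ ∑ p : Fin L, ‖(Matrix.of fun i j =>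
          ρ p * uVec N (τ p) i * (starRingEnd ℂ) (uVec N (θ p) j)
          - (ρ p * (if i ∈ win N Kτ (τ p) then uVec N (τ p) i else 0))
            * (starRingEnd ℂ) (if j ∈ win N Kθ (θ p) then uVec N (θ p) j else 0)
          : Matrix (Fin N) (Fin N) ℂ)‖ := norm_sum_le _ _
      _ ≤ ∑ p : Fin L, Real.sqrt 6 * 2 * ‖ρ p‖ * (1/Real.sqrt Kθ + 1/Real.sqrt Kτ) :=
          Finset.sum_le_sum fun p _ => perp_bound hN hKθ hKτ (ρ p) (τ p) (θ p)
      _ = (Real.sqrt 6 * 2 * (1/Real.sqrt Kθ + 1/Real.sqrt Kτ)) * ∑ p, ‖ρ p‖ := by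
          rw [Finset.mul_sum]
          exact Finset.sum_congr rfl fun p _ => by ring
      _ ≤ 6 * (1/Real.sqrt Kθ + 1/Real.sqrt Kτ) * ∑ p, ‖ρ p‖ := by
          have hX : (0:ℝ) ≤ 1/Real.sqrt Kθ + 1/Real.sqrt Kτ := by positivity
          have hS : (0:ℝ) ≤ ∑ p, ‖ρ p‖ :=
            Finset.sum_nonneg fun p _ => norm_nonneg _
          apply mul_le_mul_of_nonneg_right _ hS
          exact mul_le_mul_of_nonneg_right hsqrt6 hX
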